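/- (Submodularity) Under the grounded Laplacian setup, for any two subsets B ⊆ T ⊆ Q of the candidate edge set and any candidate edge e ∈ Q \ T, H(T ∪ {e}) − H(T) ≤ H(B ∪ {e}) − H(B). -/

import Mathlib

open Matrix Finset

set_option linter.unusedSectionVars false

variable {ι : Type*} [Fintype ι] [DecidableEq ι]

lemma keyNonneg (M : Matrix ι ι ℝ) (hPD : M.PosDef)
    (hoff : ∀ i j : ι, i ≠ j → M i j ≤ 0) (z : ι → ℝ)
    (h : ∀ i, 0 ≤ (M *ᵥ z) i ∨ z i = 0) : ∀ i, 0 ≤ z i := by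
  by_contra hcon
  push_neg at hcon
  obtain ⟨i0, hi0⟩ := hcon
  set y : ι → ℝ := fun i => min (z i) 0 with hy
  have hyne : y ≠ 0 := by
    intro h0
    have h1 := congrFun h0 i0
    simp only [hy, Pi.zero_apply] at h1
    rw [min_eq_left hi0.le] at h1
    linarith
  have hpos : 0 < y ⬝ᵥ (M *ᵥ y) := by
    have := hPD.dotProduct_mulVec_pos hyne
    simpa using this
  have hA : y ⬝ᵥ (M *ᵥ z) ≤ 0 := by
    apply Finset.sum_nonpos
    intro i _
    rcases h i with hMz | hz
    · exact mul_nonpos_of_nonpos_of_nonneg (min_le_right _ _) hMz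
    · simp [hy, hz]
  have hB : 0 ≤ y ⬝ᵥ (M *ᵥ (z - y)) := by
    simp only [dotProduct, Matrix.mulVec, Finset.mul_sum]
    apply Finset.sum_nonneg
    intro i _
    apply Finset.sum_nonneg
    intro j _
    rcases eq_or_ne i j with rfl | hij
    · have : y i * (z - y) i = 0 := by
        rcases le_or_gt 0 (z i) with hzi | hzi
        · simp [hy, min_eq_right hzi]
        · simp [hy, min_eq_left hzi.le, Pi.sub_apply]
      have h0 : y i * (M i i * (z - y) i) = 0 := by
        linear_combination (M i i) * this
      exact le_of_eq h0.symm
    · have h1 : y i ≤ 0 := min_le_right _ _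
      have h2 : M i j ≤ 0 := hoff i j hij
      have h3 : 0 ≤ (z - y) j := by
        simp only [hy, Pi.sub_apply]
        rcases le_or_gt 0 (z j) with hzj | hzj
        · simp [min_eq_right hzj]; linarith
        · simp [min_eq_left hzj.le]
      nlinarith [mul_nonneg (neg_nonneg.2 h1) (neg_nonneg.2 h2), h3,
        mul_nonneg (mul_nonneg (neg_nonneg.2 h1) (neg_nonneg.2 h2)) h3]
  have hsplit : y ⬝ᵥ (M *ᵥ y) = y ⬝ᵥ (M *ᵥ z) - y ⬝ᵥ (M *ᵥ (z - y)) := by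
    rw [Matrix.mulVec_sub, dotProduct_sub]
    ring
  linarith

lemma detUnit (M : Matrix ι ι ℝ) (hPD : M.PosDef) : IsUnit M.det :=
  hPD.det_pos.ne'.isUnit

lemma mulInv (M : Matrix ι ι ℝ) (hPD : M.PosDef) : M * M⁻¹ = 1 :=
  Matrix.mul_nonsing_inv M (detUnit M hPD)

lemma transpEq (M : Matrix ι ι ℝ) (hPD : M.PosDef) : Mᵀ = M := by
  rw [← Matrix.conjTranspose_eq_transpose_of_trivial]
  exact hPD.1

lemma invSymm (M : Matrix ι ι ℝ) (hPD : M.PosDef) : (M⁻¹)ᵀ = M⁻¹ := by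
  rw [Matrix.transpose_nonsing_inv, transpEq M hPD]

lemma invApplySymm (M : Matrix ι ι ℝ) (hPD : M.PosDef) (a b : ι) : M⁻¹ a b = M⁻¹ b a := by
  conv_lhs => rw [← invSymm M hPD]
  simp

lemma invColumn (M : Matrix ι ι ℝ) (hPD : M.PosDef) (j : ι) :
    M *ᵥ (M⁻¹ *ᵥ Pi.single j 1) = Pi.single j 1 := by
  rw [Matrix.mulVec_mulVec, mulInv M hPD, Matrix.one_mulVec]

lemma invNonneg (M : Matrix ι ι ℝ) (hPD : M.PosDef)
    (hoff : ∀ i j : ι, i ≠ j → M i j ≤ 0) (i j : ι) : 0 ≤ M⁻¹ i j := by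
  have := keyNonneg M hPD hoff (M⁻¹ *ᵥ Pi.single j 1) (fun k => by
    left
    rw [invColumn M hPD]
    rcases eq_or_ne k j with rfl | hkj
    · simp
    · simp [Pi.single_apply, hkj]) i
  simpa [Matrix.mulVec, dotProduct_single] using this

lemma invDiagPos (M : Matrix ι ι ℝ) (hPD : M.PosDef) (j : ι) : 0 < M⁻¹ j j := by
  have hinv : (M⁻¹).PosDef := hPD.inv
  have := hinv.dotProduct_mulVec_pos (x := Pi.single j 1) (by
    intro h0
    have := congrFun h0 j
    simp at this)
  have hval : star (Pi.single j (1:ℝ)) ⬝ᵥ M⁻¹ *ᵥ Pi.single j 1 = M⁻¹ j j := by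
    simp [Matrix.mulVec_single, single_dotProduct]
  rwa [hval] at this

lemma pathProd (M : Matrix ι ι ℝ) (hPD : M.PosDef)
    (hoff : ∀ i j : ι, i ≠ j → M i j ≤ 0) (i j k : ι) :
    M⁻¹ i j * M⁻¹ j k ≤ M⁻¹ i k * M⁻¹ j j := by
  have hjj := invDiagPos M hPD j
  set γ : ℝ := M⁻¹ j k / M⁻¹ j j with hγ
  set w : ι → ℝ := (Pi.single k (1:ℝ) : ι → ℝ) - γ • (Pi.single j (1:ℝ) : ι → ℝ) with hw
  set z : ι → ℝ := M⁻¹ *ᵥ w with hz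
  have hzval : ∀ l, z l = M⁻¹ l k - γ * M⁻¹ l j := by
    intro l
    simp [hz, hw, Matrix.mulVec_sub, Matrix.mulVec_smul, Matrix.mulVec_single]
  have hMz : M *ᵥ z = w := by
    rw [hz, Matrix.mulVec_mulVec, mulInv M hPD, Matrix.one_mulVec]
  have hnn := keyNonneg M hPD hoff z (fun l => by
    rcases eq_or_ne l j with rfl | hlj
    · right
      rw [hzval, hγ, div_mul_cancel₀ _ hjj.ne', sub_self]
    · left
      rw [hMz]
      simp only [hw, Pi.sub_apply, Pi.smul_apply, smul_eq_mul, Pi.single_apply,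
        if_neg hlj, mul_zero, sub_zero]
      split <;> norm_num) i
  have h2 := hnn
  rw [hzval i, sub_nonneg, hγ, div_mul_eq_mul_div, div_le_iff₀ hjj] at h2
  nlinarith [h2]

lemma mulVMV (A : Matrix ι ι ℝ) (a b : ι → ℝ) :
    A * vecMulVec a b = vecMulVec (A *ᵥ a) b := by
  ext i k
  simp only [Matrix.mul_apply, vecMulVec_apply, Matrix.mulVec, dotProduct, Finset.sum_mul]
  exact Finset.sum_congr rfl fun l _ => by ring

lemma vmvMul (A : Matrix ι ι ℝ) (a b : ι → ℝ) :
    vecMulVec a b * A = vecMulVec a (b ᵥ* A) := by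
  ext i k
  simp only [Matrix.mul_apply, vecMulVec_apply, Matrix.vecMul, dotProduct, Finset.mul_sum]
  exact Finset.sum_congr rfl fun l _ => by ring

lemma vmvMulVec (a b v : ι → ℝ) : vecMulVec a b *ᵥ v = (b ⬝ᵥ v) • a := by
  ext i
  simp only [Matrix.mulVec, dotProduct, vecMulVec_apply, Pi.smul_apply, smul_eq_mul,
    Finset.sum_mul]
  exact Finset.sum_congr rfl fun l _ => by ring

lemma vecMulVmv (a b v : ι → ℝ) : v ᵥ* vecMulVec a b = (v ⬝ᵥ a) • b := by
  ext k
  simp only [Matrix.vecMul, dotProduct, vecMulVec_apply, Pi.smul_apply, smul_eq_mul]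
  rw [Finset.sum_mul]
  exact Finset.sum_congr rfl fun l _ => by ring

lemma diagSingleEq (j : ι) :
    Matrix.diagonal (Pi.single j (1:ℝ)) = vecMulVec (Pi.single j 1) (Pi.single j 1) := by
  ext a c
  simp only [Matrix.diagonal_apply, vecMulVec_apply, Pi.single_apply]
  rcases eq_or_ne a j with rfl | haj
  · rcases eq_or_ne c a with rfl | hca
    · simp
    · simp [if_neg (fun h : c = a => hca h), Ne.symm hca]
  · simp [if_neg haj]

lemma vmvSmulRight (a b : ι → ℝ) (t : ℝ) :
    vecMulVec a (t • b) = t • vecMulVec a b := by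
  ext i k
  simp only [vecMulVec_apply, Pi.smul_apply, smul_eq_mul, Matrix.smul_apply]
  ring

lemma oneAddDiagPos (M : Matrix ι ι ℝ) (hPD : M.PosDef) (j : ι) : (0:ℝ) < 1 + M⁻¹ j j := by
  have := invDiagPos M hPD j
  linarith

lemma vecMulInvSymm (M : Matrix ι ι ℝ) (hPD : M.PosDef) (v : ι → ℝ) :
    v ᵥ* M⁻¹ = M⁻¹ *ᵥ v := by
  conv_lhs => rw [← invSymm M hPD]
  exact Matrix.vecMul_transpose _ _

lemma invAddSingle (M : Matrix ι ι ℝ) (hPD : M.PosDef) (j : ι) :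
    (M + Matrix.diagonal (Pi.single j 1))⁻¹
      = M⁻¹ - (1 + M⁻¹ j j)⁻¹ •
          vecMulVec (M⁻¹ *ᵥ Pi.single j 1) (M⁻¹ *ᵥ Pi.single j 1) := by
  have hjj := invDiagPos M hPD j
  have hne : (1 : ℝ) + M⁻¹ j j ≠ 0 := by linarith
  apply Matrix.inv_eq_right_inv
  set y := M⁻¹ *ᵥ Pi.single j (1:ℝ) with hy
  set α := ((1:ℝ) + M⁻¹ j j)⁻¹ with hα
  have hMy : M *ᵥ y = Pi.single j 1 := invColumn M hPD j
  have hvm : Pi.single j (1:ℝ) ᵥ* M⁻¹ = y := vecMulInvSymm M hPD _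
  have hyj : Pi.single j (1:ℝ) ⬝ᵥ y = M⁻¹ j j := by
    rw [single_dotProduct, one_mul, hy]
    simp [Matrix.mulVec_single]
  rw [diagSingleEq, Matrix.add_mul, Matrix.mul_sub, Matrix.mul_sub, Matrix.mul_smul,
    Matrix.mul_smul, mulInv M hPD, mulVMV, hMy, vmvMul, hvm, vmvMul, vecMulVmv, hyj,
    vmvSmulRight, smul_smul]
  set W := vecMulVec (Pi.single j (1:ℝ)) y with hW
  have hcomb : α • W + (α * M⁻¹ j j) • W = W := by
    have hmul : α * (1 + M⁻¹ j j) = 1 := by rw [hα]; exact inv_mul_cancel₀ hne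
    rw [← add_smul, show α + α * M⁻¹ j j = 1 by linear_combination hmul, one_smul]
  calc 1 - α • W + (W - (α * M⁻¹ j j) • W)
      = 1 + (W - (α • W + (α * M⁻¹ j j) • W)) := by abel
    _ = 1 := by rw [hcomb, sub_self, add_zero]

lemma margEq (M : Matrix ι ι ℝ) (hPD : M.PosDef) (w : ι → ℝ) (i : ι) :
    (1 : ι → ℝ) ⬝ᵥ ((M + Matrix.diagonal (Pi.single i 1))⁻¹ *ᵥ (w + Pi.single i 1))
      = (1 : ι → ℝ) ⬝ᵥ (M⁻¹ *ᵥ w)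
        + (M⁻¹ *ᵥ 1) i * (1 - (M⁻¹ *ᵥ w) i) / (1 + M⁻¹ i i) := by
  have hjj := invDiagPos M hPD i
  have hne : (1 : ℝ) + M⁻¹ i i ≠ 0 := by linarith
  rw [invAddSingle M hPD i]
  set y := M⁻¹ *ᵥ Pi.single i (1:ℝ) with hy
  set α := ((1:ℝ) + M⁻¹ i i)⁻¹ with hα
  have hu : (1 : ι → ℝ) ⬝ᵥ y = (M⁻¹ *ᵥ 1) i := by
    rw [hy, Matrix.dotProduct_mulVec, vecMulInvSymm M hPD, dotProduct_single, mul_one]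
  have hyw : y ⬝ᵥ w = (M⁻¹ *ᵥ w) i := by
    rw [dotProduct_comm, hy, Matrix.dotProduct_mulVec, vecMulInvSymm M hPD,
      dotProduct_single, mul_one]
  have hyδ : y ⬝ᵥ Pi.single i 1 = M⁻¹ i i := by
    rw [dotProduct_single, mul_one, hy]
    simp [Matrix.mulVec_single]
  rw [Matrix.sub_mulVec, Matrix.mulVec_add, Matrix.smul_mulVec, vmvMulVec,
    dotProduct_sub, dotProduct_add, dotProduct_smul, dotProduct_smul, dotProduct_add,
    hyw, hyδ, hu, div_eq_mul_inv]
  have hmul : (1 + M⁻¹ i i)⁻¹ * (1 + M⁻¹ i i) = 1 := inv_mul_cancel₀ hne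
  simp only [hα, smul_eq_mul]
  linear_combination (-(M⁻¹ *ᵥ 1) i) * hmul

lemma arithIneq (a a' t s s' xi xj β : ℝ)
    (ht : 0 ≤ t) (hs : 0 ≤ s) (ha : 0 ≤ a) (ha' : 0 ≤ a')
    (hxi : xi ≤ 1) (hxj : xj ≤ 1)
    (hβ : 0 < β) (hmul : β * (1 + s') = 1)
    (hspos : 0 ≤ s - β * (t * t))
    (K1 : a' * t ≤ a * s') (K3 : a * t ≤ a' * s) :
    (a - β * (a' * t)) * (1 - (xi + β * ((1 - xj) * t))) / (1 + (s - β * (t * t)))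
      ≤ a * (1 - xi) / (1 + s) := by
  rw [div_le_div_iff₀ (by linarith) (by linarith)]
  have hp : 0 ≤ 1 - xi := by linarith
  have hp' : 0 ≤ 1 - xj := by linarith
  have B1 : β * (t * t * (a * (1 - xi))) ≤ β * (t * ((1 + s) * (a' * (1 - xi)))) := by
    apply mul_le_mul_of_nonneg_left _ hβ.le
    have h1 : (a * t) * (t * (1 - xi)) ≤ (a' * s) * (t * (1 - xi)) :=
      mul_le_mul_of_nonneg_right K3 (mul_nonneg ht hp)
    nlinarith [mul_nonneg (mul_nonneg ha' ht) hp]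
  have hβs' : β * s' = 1 - β := by linear_combination hmul
  have B2 : β * (a' * t) ≤ a := by
    have h1 : β * (a' * t) ≤ β * (a * s') := mul_le_mul_of_nonneg_left K1 hβ.le
    nlinarith [mul_nonneg hβ.le ha]
  have B2' : (β * (a' * t)) * (β * t * (1 - xj) * (1 + s)) ≤ a * (β * t * (1 - xj) * (1 + s)) :=
    mul_le_mul_of_nonneg_right B2 (by positivity)
  nlinarith [B1, B2']

lemma mulVecOneNonneg (M : Matrix ι ι ℝ) (hPD : M.PosDef)
    (hoff : ∀ i j : ι, i ≠ j → M i j ≤ 0) (i : ι) : 0 ≤ (M⁻¹ *ᵥ 1) i := by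
  simp only [Matrix.mulVec, dotProduct, Pi.one_apply, mul_one]
  exact Finset.sum_nonneg fun k _ => invNonneg M hPD hoff i k

lemma solLeOne (M : Matrix ι ι ℝ) (hPD : M.PosDef)
    (hoff : ∀ i j : ι, i ≠ j → M i j ≤ 0)
    (w : ι → ℝ) (hrow : ∀ i, w i ≤ (M *ᵥ 1) i) (k : ι) : (M⁻¹ *ᵥ w) k ≤ 1 := by
  have h0 := keyNonneg M hPD hoff (1 - M⁻¹ *ᵥ w) (fun l => by
    left
    rw [Matrix.mulVec_sub, Matrix.mulVec_mulVec, mulInv M hPD, Matrix.one_mulVec]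
    simp only [Pi.sub_apply]
    linarith [hrow l]) k
  simp only [Pi.sub_apply, Pi.one_apply] at h0
  linarith

lemma stepMono (M : Matrix ι ι ℝ) (hPD : M.PosDef)
    (hoff : ∀ i j : ι, i ≠ j → M i j ≤ 0)
    (w : ι → ℝ) (hrow : ∀ i, w i ≤ (M *ᵥ 1) i) (i j : ι) :
    (1 : ι → ℝ) ⬝ᵥ ((M + Matrix.diagonal (Pi.single j 1) + Matrix.diagonal (Pi.single i 1))⁻¹
        *ᵥ (w + Pi.single j 1 + Pi.single i 1))
      - (1 : ι → ℝ) ⬝ᵥ ((M + Matrix.diagonal (Pi.single j 1))⁻¹ *ᵥ (w + Pi.single j 1))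
    ≤ (1 : ι → ℝ) ⬝ᵥ ((M + Matrix.diagonal (Pi.single i 1))⁻¹ *ᵥ (w + Pi.single i 1))
      - (1 : ι → ℝ) ⬝ᵥ (M⁻¹ *ᵥ w) := by
  have hPSD : (Matrix.diagonal (Pi.single j (1:ℝ)) : Matrix ι ι ℝ).PosSemidef := by
    rw [Matrix.posSemidef_diagonal_iff]
    intro k
    rw [Pi.single_apply]
    split <;> norm_num
  set M' := M + Matrix.diagonal (Pi.single j (1:ℝ)) with hM'
  have hPD' : M'.PosDef := hPD.add_posSemidef hPSD
  have hoff' : ∀ a b : ι, a ≠ b → M' a b ≤ 0 := by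
    intro a b hab
    rw [hM', Matrix.add_apply, Matrix.diagonal_apply_ne _ hab, add_zero]
    exact hoff a b hab
  rw [margEq M' hPD' (w + Pi.single j 1) i, margEq M hPD w i,
    add_sub_cancel_left, add_sub_cancel_left]
  -- notation
  have hjj := invDiagPos M hPD j
  set β := ((1:ℝ) + M⁻¹ j j)⁻¹ with hβdef
  have hβ : 0 < β := by rw [hβdef]; positivity
  have hmul : β * (1 + M⁻¹ j j) = 1 := inv_mul_cancel₀ (by linarith)
  set y := M⁻¹ *ᵥ Pi.single j (1:ℝ) with hy
  have hN' : M'⁻¹ = M⁻¹ - β • vecMulVec y y := invAddSingle M hPD j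
  have hyk : ∀ k, y k = M⁻¹ k j := by
    intro k
    simp [hy, Matrix.mulVec_single]
  have hu1 : (1 : ι → ℝ) ⬝ᵥ y = (M⁻¹ *ᵥ 1) j := by
    rw [hy, Matrix.dotProduct_mulVec, vecMulInvSymm M hPD, dotProduct_single, mul_one]
  have hyw : y ⬝ᵥ w = (M⁻¹ *ᵥ w) j := by
    rw [hy, dotProduct_comm, Matrix.dotProduct_mulVec, vecMulInvSymm M hPD,
      dotProduct_single, mul_one]
  have hyδ : y ⬝ᵥ Pi.single j 1 = M⁻¹ j j := by
    rw [dotProduct_single, mul_one, hyk]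
  have hu'i : (M'⁻¹ *ᵥ 1) i = (M⁻¹ *ᵥ 1) i - β * ((M⁻¹ *ᵥ 1) j * M⁻¹ i j) := by
    rw [hN', Matrix.sub_mulVec, Matrix.smul_mulVec, vmvMulVec]
    simp only [Pi.sub_apply, Pi.smul_apply, smul_eq_mul]
    rw [dotProduct_comm, hu1, hyk i]
  have hx'i : (M'⁻¹ *ᵥ (w + Pi.single j 1)) i
      = (M⁻¹ *ᵥ w) i + β * ((1 - (M⁻¹ *ᵥ w) j) * M⁻¹ i j) := by
    rw [hN', Matrix.sub_mulVec, Matrix.smul_mulVec, vmvMulVec, Matrix.mulVec_add]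
    simp only [Pi.sub_apply, Pi.add_apply, Pi.smul_apply, smul_eq_mul]
    rw [dotProduct_add, hyw, hyδ, ← hy, hyk i]
    linear_combination (-(M⁻¹ i j)) * hmul
  have hN'ii : M'⁻¹ i i = M⁻¹ i i - β * (M⁻¹ i j * M⁻¹ i j) := by
    rw [hN']
    simp only [Matrix.sub_apply, Matrix.smul_apply, vecMulVec_apply, smul_eq_mul, hyk]
  have hs'' : 0 ≤ M⁻¹ i i - β * (M⁻¹ i j * M⁻¹ i j) := by
    rw [← hN'ii]
    exact invNonneg M' hPD' hoff' i i
  have K1 : (M⁻¹ *ᵥ 1) j * M⁻¹ i j ≤ (M⁻¹ *ᵥ 1) i * M⁻¹ j j := by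
    simp only [Matrix.mulVec, dotProduct, Pi.one_apply, mul_one, Finset.sum_mul]
    apply Finset.sum_le_sum
    intro k _
    rw [mul_comm]
    exact pathProd M hPD hoff i j k
  have K3 : (M⁻¹ *ᵥ 1) i * M⁻¹ i j ≤ (M⁻¹ *ᵥ 1) j * M⁻¹ i i := by
    simp only [Matrix.mulVec, dotProduct, Pi.one_apply, mul_one, Finset.sum_mul]
    apply Finset.sum_le_sum
    intro k _
    rw [mul_comm, invApplySymm M hPD i j]
    exact pathProd M hPD hoff j i k
  rw [hu'i, hx'i, hN'ii]
  exact arithIneq ((M⁻¹ *ᵥ 1) i) ((M⁻¹ *ᵥ 1) j) (M⁻¹ i j) (M⁻¹ i i) (M⁻¹ j j)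
    ((M⁻¹ *ᵥ w) i) ((M⁻¹ *ᵥ w) j) β
    (invNonneg M hPD hoff i j) (invNonneg M hPD hoff i i)
    (mulVecOneNonneg M hPD hoff i) (mulVecOneNonneg M hPD hoff j)
    (solLeOne M hPD hoff w hrow i) (solLeOne M hPD hoff w hrow j)
    hβ hmul hs'' K1 K3


/-- **Submodularity.** Under the grounded Laplacian setup, for any two subsets `B ⊆ T ⊆ Q` of the
candidate edge set and any candidate edge `e ∈ Q \\ T`,
`H(T ∪ {e}) − H(T) ≤ H(B ∪ {e}) − H(B)`, where for `P ⊆ Q` the overall opinion is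
`H(P) = 𝟏ᵀ (L_F + diag(c_P))⁻¹ (b + c_P)` and `(c_P)ᵢ = |{a ∈ S₁ : (a,i) ∈ P}|`. -/
theorem stmt4 {V : Type} [Fintype V] [DecidableEq V]
    (G : SimpleGraph V) [DecidableRel G.Adj] (hconn : G.Connected)
    (F S0 S1 : Finset V)
    (hFne : F.Nonempty) (hS1ne : S1.Nonempty)
    (hFS0 : Disjoint F S0) (hFS1 : Disjoint F S1) (hS0S1 : Disjoint S0 S1)
    (hcover : F ∪ S0 ∪ S1 = Finset.univ)
    (LF : Matrix F F ℝ)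
    (hLF : LF = (G.lapMatrix ℝ).submatrix (fun i : F => (i : V)) (fun i : F => (i : V)))
    (hPD : LF.PosDef) (hnn : ∀ i j : F, 0 ≤ LF⁻¹ i j)
    (b : F → ℝ)
    (hb : ∀ i : F, b i = ((S1.filter fun a => G.Adj a (i : V)).card : ℝ))
    (Q : Finset (V × V))
    (hQ : ∀ e ∈ Q, e.1 ∈ S1 ∧ e.2 ∈ F ∧ ¬ G.Adj e.1 e.2)
    (c : Finset (V × V) → F → ℝ)
    (hc : ∀ P, ∀ i : F, c P i = ((P.filter fun e => e.2 = (i : V)).card : ℝ))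
    (H : Finset (V × V) → ℝ)
    (hH : ∀ P ⊆ Q, H P = (1 : F → ℝ) ⬝ᵥ ((LF + Matrix.diagonal (c P))⁻¹ *ᵥ (b + c P)))
    (B T : Finset (V × V)) (hBT : B ⊆ T) (hTQ : T ⊆ Q)
    (e : V × V) (he : e ∈ Q \ T) :
    H (insert e T) - H T ≤ H (insert e B) - H B := by
  obtain ⟨heQ, heT⟩ := Finset.mem_sdiff.mp he
  -- off-diagonal entries of LF are nonpositive
  have hoffLF : ∀ i j : F, i ≠ j → LF i j ≤ 0 := by
    intro i j hij
    have hco : (i : V) ≠ (j : V) := fun h => hij (Subtype.coe_injective h)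
    rw [hLF]
    simp only [Matrix.submatrix_apply, SimpleGraph.lapMatrix, SimpleGraph.degMatrix,
      Matrix.sub_apply, Matrix.diagonal_apply_ne _ hco, SimpleGraph.adjMatrix_apply]
    split <;> norm_num
  -- c is nonnegative
  have hcnn : ∀ P, ∀ i : F, 0 ≤ c P i := by
    intro P i
    rw [hc]
    positivity
  -- the grounded matrices are positive definite with nonpositive off-diagonals
  have goodPD : ∀ P, (LF + Matrix.diagonal (c P)).PosDef := by
    intro P
    exact hPD.add_posSemidef (Matrix.posSemidef_diagonal_iff.2 (hcnn P))
  have goodoff : ∀ P, ∀ i j : F, i ≠ j → (LF + Matrix.diagonal (c P)) i j ≤ 0 := by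
    intro P i j hij
    rw [Matrix.add_apply, Matrix.diagonal_apply_ne _ hij, add_zero]
    exact hoffLF i j hij
  -- row sums dominate b
  have hbrow : ∀ i : F, b i ≤ (LF *ᵥ 1) i := by
    intro i
    have hrow : (LF *ᵥ 1) i = ∑ j : F, LF i j := by
      simp [Matrix.mulVec, dotProduct]
    have hdegsum : ((G.degree (i : V) : ℝ)) =
        ∑ v : V, (if G.Adj (i : V) v then (1:ℝ) else 0) := by
      rw [SimpleGraph.degree, SimpleGraph.neighborFinset_eq_filter, Finset.card_filter]
      push_cast
      rfl
    have hLFsum : (LF *ᵥ 1) i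
        = (G.degree (i : V) : ℝ) - ∑ j : F, (if G.Adj (i : V) (j : V) then (1:ℝ) else 0) := by
      rw [hrow, hLF]
      simp only [Matrix.submatrix_apply, SimpleGraph.lapMatrix, SimpleGraph.degMatrix,
        Matrix.sub_apply, SimpleGraph.adjMatrix_apply]
      rw [Finset.sum_sub_distrib]
      congr 1
      rw [Finset.sum_eq_single i]
      · simp
      · intro j _ hji
        exact Matrix.diagonal_apply_ne _ (fun h => hji (Subtype.coe_injective h.symm))
      · intro h
        exact absurd (Finset.mem_univ i) h
    have hsubF : ∑ j : F, (if G.Adj (i : V) (j : V) then (1:ℝ) else 0)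
        = ∑ v ∈ F, (if G.Adj (i : V) v then (1:ℝ) else 0) := by
      exact Finset.sum_coe_sort F (fun v => if G.Adj (i : V) v then (1:ℝ) else 0)
    have hbs : b i = ∑ v ∈ S1, (if G.Adj (i : V) v then (1:ℝ) else 0) := by
      rw [hb, Finset.card_filter]
      push_cast
      apply Finset.sum_congr rfl
      intro v _
      exact if_congr (G.adj_comm v (i : V)) rfl rfl
    have hsum_le : ∑ v ∈ S1, (if G.Adj (i : V) v then (1:ℝ) else 0)
        + ∑ v ∈ F, (if G.Adj (i : V) v then (1:ℝ) else 0)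
        ≤ ∑ v : V, (if G.Adj (i : V) v then (1:ℝ) else 0) := by
      rw [← Finset.sum_union (Finset.disjoint_left.mpr
        (fun a haS1 haF => (Finset.disjoint_left.mp hFS1) haF haS1))]
      apply Finset.sum_le_sum_of_subset_of_nonneg (Finset.subset_univ _)
      intro v _ _
      split <;> norm_num
    linarith [hsum_le, hdegsum.le, hdegsum.ge, hbs.le, hbs.ge, hLFsum.le, hLFsum.ge,
      hsubF.le, hsubF.ge]
  have hrowP : ∀ P, ∀ i : F, (b + c P) i ≤ ((LF + Matrix.diagonal (c P)) *ᵥ 1) i := by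
    intro P i
    rw [Matrix.add_mulVec]
    simp only [Pi.add_apply, Matrix.mulVec_diagonal, Pi.one_apply, mul_one]
    linarith [hbrow i]
  -- inserting one candidate edge adds a Pi.single to c
  have hcins : ∀ (P : Finset (V × V)) (f : V × V) (hf : f ∈ Q), f ∉ P →
      c (insert f P) = c P + Pi.single (⟨f.2, (hQ f hf).2.1⟩ : F) 1 := by
    intro P f hf hfP
    funext j
    simp only [Pi.add_apply]
    rw [hc, hc, Finset.filter_insert]
    rcases eq_or_ne (f.2) (j : V) with hfj | hfj
    · rw [if_pos hfj]
      have hj : (⟨f.2, (hQ f hf).2.1⟩ : F) = j := Subtype.ext hfj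
      rw [hj, Pi.single_eq_same]
      rw [Finset.card_insert_of_notMem (fun hmem => hfP (Finset.mem_filter.mp hmem).1)]
      push_cast
      ring
    · rw [if_neg hfj]
      have hj : j ≠ (⟨f.2, (hQ f hf).2.1⟩ : F) := by
        intro hcontra
        exact hfj (by rw [hcontra])
      rw [Pi.single_eq_of_ne hj, add_zero]
  -- the one-step submodularity inequality
  have keystep : ∀ (P : Finset (V × V)), P ⊆ Q → ∀ f ∈ Q, f ∉ P → ∀ g ∈ Q,
      g ∉ insert f P →
      H (insert g (insert f P)) - H (insert f P) ≤ H (insert g P) - H P := by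
    intro P hPQ f hf hfP g hg hgfP
    have hgP : g ∉ P := fun h => hgfP (Finset.mem_insert_of_mem h)
    set j₀ : F := ⟨f.2, (hQ f hf).2.1⟩
    set i₀ : F := ⟨g.2, (hQ g hg).2.1⟩
    have hfPQ : insert f P ⊆ Q := Finset.insert_subset hf hPQ
    have hgPQ : insert g P ⊆ Q := Finset.insert_subset hg hPQ
    have hgfPQ : insert g (insert f P) ⊆ Q := Finset.insert_subset hg hfPQ
    rw [hH _ hPQ, hH _ hfPQ, hH _ hgPQ, hH _ hgfPQ]
    rw [hcins (insert f P) g hg hgfP, hcins P f hf hfP, hcins P g hg hgP]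
    have hmeq1 : LF + Matrix.diagonal (c P + Pi.single j₀ 1 + Pi.single i₀ 1)
        = LF + Matrix.diagonal (c P) + Matrix.diagonal (Pi.single j₀ 1)
          + Matrix.diagonal (Pi.single i₀ 1) := by
      ext a d
      by_cases had : a = d <;>
        simp [Matrix.add_apply, Matrix.diagonal_apply, had, Pi.add_apply] <;> ring
    have hmeq2 : LF + Matrix.diagonal (c P + Pi.single j₀ 1)
        = LF + Matrix.diagonal (c P) + Matrix.diagonal (Pi.single j₀ 1) := by
      ext a d
      by_cases had : a = d <;>
        simp [Matrix.add_apply, Matrix.diagonal_apply, had, Pi.add_apply] <;> ring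
    have hmeq3 : LF + Matrix.diagonal (c P + Pi.single i₀ 1)
        = LF + Matrix.diagonal (c P) + Matrix.diagonal (Pi.single i₀ 1) := by
      ext a d
      by_cases had : a = d <;>
        simp [Matrix.add_apply, Matrix.diagonal_apply, had, Pi.add_apply] <;> ring
    have hveq1 : b + (c P + Pi.single j₀ 1 + Pi.single i₀ 1)
        = (b + c P) + Pi.single j₀ 1 + Pi.single i₀ 1 := by abel
    have hveq2 : b + (c P + Pi.single j₀ 1) = (b + c P) + Pi.single j₀ 1 := by abel
    have hveq3 : b + (c P + Pi.single i₀ 1) = (b + c P) + Pi.single i₀ 1 := by abel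
    rw [hmeq1, hmeq2, hmeq3, hveq1, hveq2, hveq3]
    exact stepMono (LF + Matrix.diagonal (c P)) (goodPD P) (goodoff P)
      (b + c P) (hrowP P) i₀ j₀
  -- main induction on the size of T \ B'
  have main : ∀ (n : ℕ) (B' : Finset (V × V)), B' ⊆ T → (T \ B').card = n →
      H (insert e T) - H T ≤ H (insert e B') - H B' := by
    intro n
    induction n with
    | zero =>
      intro B' hB'T hcard
      have : T ⊆ B' := Finset.sdiff_eq_empty_iff_subset.mp (Finset.card_eq_zero.mp hcard)
      have hTB : B' = T := Finset.Subset.antisymm hB'T this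
      rw [hTB]
    | succ n ih =>
      intro B' hB'T hcard
      have hne : (T \ B').Nonempty := by
        rw [← Finset.card_pos, hcard]
        omega
      obtain ⟨f, hf⟩ := hne
      obtain ⟨hfT, hfB'⟩ := Finset.mem_sdiff.mp hf
      have hstep1 : H (insert e T) - H T ≤ H (insert e (insert f B')) - H (insert f B') := by
        apply ih (insert f B') (Finset.insert_subset hfT hB'T)
        rw [Finset.sdiff_insert, Finset.card_erase_of_mem hf, hcard]
        omega
      have hstep2 : H (insert e (insert f B')) - H (insert f B')
          ≤ H (insert e B') - H B' := by
        apply keystep B' (hB'T.trans hTQ) f (hTQ hfT) hfB' e heQ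
        intro hmem
        rcases Finset.mem_insert.mp hmem with heqf | heB'
        · exact heT (heqf ▸ hfT)
        · exact heT (hB'T heB')
      linarith
  exact main (T \ B).card B hBT rfl
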